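/- arXiv:1010.6038 — 3 statements merged into one kernel-verified Lean document; each statement's English description precedes it below -/
import Mathlib

section
/- Let A be a complete discrete valuation ring in which 2 is invertible, with fraction field K and residue field k, and uniformizer π. Let α₁,...,α_r and β₁,...,β_s be units of A. Then the quadratic form ⟨α₁,...,α_r⟩ ⊥ π·⟨β₁,...,β_s⟩ over K is anisotropic if and only if both residue forms ⟨ᾱ₁,...,ᾱ_r⟩ and ⟨β̄₁,...,β̄_s⟩ are anisotropic over k. -/
open IsLocalRing

lemma aux_pow_dvd_zero {A : Type} [CommRing A] [IsDomain A] [IsDiscreteValuationRing A]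
    {π : A} (hπ : Irreducible π) {x : A} (h : ∀ n : ℕ, π ^ n ∣ x) : x = 0 := by
  by_contra hx
  obtain ⟨n, u, rfl⟩ := IsDiscreteValuationRing.eq_unit_mul_pow_irreducible hx hπ
  obtain ⟨c, hc⟩ := h (n + 1)
  rw [pow_succ] at hc
  have hdvd : (π : A) ∣ (u : A) := by
    refine ⟨c, mul_left_cancel₀ (pow_ne_zero n hπ.ne_zero) ?_⟩
    linear_combination hc
  exact hπ.not_isUnit (isUnit_of_dvd_unit hdvd u.isUnit)

lemma aux_hensel_sq {A : Type} [CommRing A] [IsLocalRing A]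
    [IsAdicComplete (IsLocalRing.maximalIdeal A) A]
    (h2 : IsUnit (2 : A)) (u : Aˣ) {x₀ : A} (hx₀ : IsUnit x₀) (c : A)
    (h : (u : A) * x₀ ^ 2 + c ∈ maximalIdeal A) :
    ∃ t : A, IsUnit t ∧ (u : A) * t ^ 2 + c = 0 := by
  have hui : (u : A) * ↑u⁻¹ = 1 := u.mul_inv
  have hmem : Polynomial.eval x₀ (Polynomial.X ^ 2 + Polynomial.C ((↑u⁻¹ : A) * c)) ∈
      maximalIdeal A := by
    have heq : Polynomial.eval x₀ (Polynomial.X ^ 2 + Polynomial.C ((↑u⁻¹ : A) * c))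
        = (↑u⁻¹ : A) * ((u : A) * x₀ ^ 2 + c) := by
      have : (↑u⁻¹ : A) * (u : A) = 1 := u.inv_mul
      simp only [Polynomial.eval_add, Polynomial.eval_pow, Polynomial.eval_X, Polynomial.eval_C]
      linear_combination (-(x₀ ^ 2) : A) * this
    rw [heq]
    exact Ideal.mul_mem_left _ _ h
  have hderiv : IsUnit (Ideal.Quotient.mk (maximalIdeal A)
      (Polynomial.eval x₀ (Polynomial.derivative (Polynomial.X ^ 2 + Polynomial.C ((↑u⁻¹ : A) * c))))) := by
    have heq : Polynomial.eval x₀ (Polynomial.derivative (Polynomial.X ^ 2 + Polynomial.C ((↑u⁻¹ : A) * c)))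
        = 2 * x₀ := by
      simp only [Polynomial.derivative_add, Polynomial.derivative_C, Polynomial.derivative_X_pow, Polynomial.eval_add, Polynomial.eval_zero, Polynomial.eval_mul, Polynomial.eval_pow, Polynomial.eval_X, Polynomial.eval_natCast, Polynomial.eval_C, add_zero]
      push_cast
      ring
    rw [heq]
    exact (h2.mul hx₀).map (Ideal.Quotient.mk (maximalIdeal A))
  obtain ⟨a, ha, ha'⟩ := HenselianRing.is_henselian (I := maximalIdeal A)
    (Polynomial.X ^ 2 + Polynomial.C ((↑u⁻¹ : A) * c))
    (Polynomial.monic_X_pow_add_C _ (by norm_num)) x₀ hmem hderiv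
  have hroot : a ^ 2 + (↑u⁻¹ : A) * c = 0 := by
    simpa [Polynomial.IsRoot] using ha
  refine ⟨a, ?_, by linear_combination (u : A) * hroot - c * hui⟩
  by_contra hu
  have hmem' : a ∈ maximalIdeal A := hu
  have hx : x₀ ∈ maximalIdeal A := by
    have := Ideal.sub_mem _ hmem' ha'
    simpa using this
  exact (IsLocalRing.mem_maximalIdeal x₀).mp hx hx₀

lemma aux_int {A : Type} [CommRing A] [IsDomain A] [IsDiscreteValuationRing A]
    {π : A} (hπ : Irreducible π) {r s : ℕ} (α : Fin r → Aˣ) (β : Fin s → Aˣ)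
    (hα : ∀ x : Fin r → ResidueField A, ∑ i, residue A (α i) * x i ^ 2 = 0 → x = 0)
    (hβ : ∀ y : Fin s → ResidueField A, ∑ j, residue A (β j) * y j ^ 2 = 0 → y = 0)
    (n : ℕ) :
    ∀ (a : Fin r → A) (b : Fin s → A),
      (∑ i, (α i : A) * a i ^ 2) + π * ∑ j, (β j : A) * b j ^ 2 = 0 →
      (∀ i, π ^ n ∣ a i) ∧ ∀ j, π ^ n ∣ b j := by
  have hπ0 : residue A π = 0 :=
    Ideal.Quotient.eq_zero_iff_mem.mpr ((mem_maximalIdeal π).mpr hπ.not_isUnit)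
  have hspan : maximalIdeal A = Ideal.span {π} :=
    (IsDiscreteValuationRing.irreducible_iff_uniformizer π).mp hπ
  induction n with
  | zero => intro a b _; simp
  | succ n ih =>
    intro a b heq
    -- reduce mod the maximal ideal : the α-part vanishes
    have h1 : ∑ i, residue A ((α i : A)) * (residue A (a i)) ^ 2 = 0 := by
      have := congrArg (residue A) heq
      simpa [map_add, map_sum, map_mul, map_pow, hπ0] using this
    have ha0 : ∀ i, π ∣ a i := by
      intro i
      have := congrFun (hα (fun i => residue A (a i)) h1) i
      rw [← Ideal.mem_span_singleton, ← hspan]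
      exact Ideal.Quotient.eq_zero_iff_mem.mp this
    choose a' ha' using ha0
    have heq2 : π * ((π * ∑ i, (α i : A) * a' i ^ 2) + ∑ j, (β j : A) * b j ^ 2) = 0 := by
      have hsum : ∑ i, (α i : A) * a i ^ 2 = π ^ 2 * ∑ i, (α i : A) * a' i ^ 2 := by
        rw [Finset.mul_sum]
        refine Finset.sum_congr rfl fun i _ => ?_
        rw [ha' i]; ring
      linear_combination heq - hsum
    have heq3 : (π * ∑ i, (α i : A) * a' i ^ 2) + ∑ j, (β j : A) * b j ^ 2 = 0 :=
      (mul_eq_zero.mp heq2).resolve_left hπ.ne_zero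
    have h2 : ∑ j, residue A ((β j : A)) * (residue A (b j)) ^ 2 = 0 := by
      have := congrArg (residue A) heq3
      simpa [map_add, map_sum, map_mul, map_pow, hπ0] using this
    have hb0 : ∀ j, π ∣ b j := by
      intro j
      have := congrFun (hβ (fun j => residue A (b j)) h2) j
      rw [← Ideal.mem_span_singleton, ← hspan]
      exact Ideal.Quotient.eq_zero_iff_mem.mp this
    choose b' hb' using hb0
    have heq4 : π * ((∑ i, (α i : A) * a' i ^ 2) + π * ∑ j, (β j : A) * b' j ^ 2) = 0 := by
      have hsum : ∑ j, (β j : A) * b j ^ 2 = π ^ 2 * ∑ j, (β j : A) * b' j ^ 2 := by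
        rw [Finset.mul_sum]
        refine Finset.sum_congr rfl fun j _ => ?_
        rw [hb' j]; ring
      linear_combination heq3 - hsum
    have heq5 : (∑ i, (α i : A) * a' i ^ 2) + π * ∑ j, (β j : A) * b' j ^ 2 = 0 :=
      (mul_eq_zero.mp heq4).resolve_left hπ.ne_zero
    obtain ⟨hA, hB⟩ := ih a' b' heq5
    constructor
    · intro i; rw [ha' i, pow_succ, mul_comm]
      exact mul_dvd_mul_left π (hA i)
    · intro j; rw [hb' j, pow_succ, mul_comm]
      exact mul_dvd_mul_left π (hB j)

/-- **Springer's lemma.** Let `A` be a complete discrete valuation ring in which `2` is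
invertible, with fraction field `K` and residue field `k`, and uniformizer `π`. Let
`α₁, …, α_r` and `β₁, …, β_s` be units of `A`. Then the diagonal quadratic form
`⟨α₁,…,α_r⟩ ⊥ π·⟨β₁,…,β_s⟩` over `K` is anisotropic if and only if both residue forms
`⟨ᾱ₁,…,ᾱ_r⟩` and `⟨β̄₁,…,β̄_s⟩` are anisotropic over `k`. -/
theorem springer_lemma
    (A : Type) [CommRing A] [IsDomain A] [IsDiscreteValuationRing A]
    [IsAdicComplete (IsLocalRing.maximalIdeal A) A]
    (h2 : IsUnit (2 : A))
    (K : Type) [Field K] [Algebra A K] [IsFractionRing A K]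
    (π : A) (hπ : Irreducible π)
    (r s : ℕ) (α : Fin r → Aˣ) (β : Fin s → Aˣ) :
    (∀ (x : Fin r → K) (y : Fin s → K),
        (∑ i, algebraMap A K (α i) * x i ^ 2)
          + algebraMap A K π * ∑ j, algebraMap A K (β j) * y j ^ 2 = 0 →
        x = 0 ∧ y = 0)
    ↔ ((∀ x : Fin r → IsLocalRing.ResidueField A,
          ∑ i, IsLocalRing.residue A (α i) * x i ^ 2 = 0 → x = 0)
        ∧ (∀ y : Fin s → IsLocalRing.ResidueField A,
          ∑ j, IsLocalRing.residue A (β j) * y j ^ 2 = 0 → y = 0)) := by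
  have hinj : Function.Injective (algebraMap A K) := IsFractionRing.injective A K
  constructor
  · intro H
    constructor
    · -- α residue form anisotropic
      intro xb hxb
      by_contra hne
      obtain ⟨i₀, hi₀⟩ : ∃ i₀, xb i₀ ≠ 0 := by
        by_contra hc
        push_neg at hc
        exact hne (funext hc)
      choose a ha using fun i => Ideal.Quotient.mk_surjective (I := maximalIdeal A) (xb i)
      have hunit : IsUnit (a i₀) := by
        by_contra hu
        exact hi₀ (by rw [← ha i₀]; exact Ideal.Quotient.eq_zero_iff_mem.mpr hu)
      set c : A := ∑ i ∈ Finset.univ.erase i₀, (α i : A) * a i ^ 2 with hc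
      have hsum : ∑ i, (α i : A) * a i ^ 2 = (α i₀ : A) * a i₀ ^ 2 + c := by
        rw [hc, Finset.add_sum_erase _ (fun i => (α i : A) * a i ^ 2) (Finset.mem_univ i₀)]
      have ha' : ∀ i, residue A (a i) = xb i := ha
      have hmem : (α i₀ : A) * a i₀ ^ 2 + c ∈ maximalIdeal A := by
        rw [← hsum]
        have h0 : residue A (∑ i, (α i : A) * a i ^ 2) = 0 := by
          rw [map_sum]
          simp only [map_mul, map_pow, ha']
          exact hxb
        exact Ideal.Quotient.eq_zero_iff_mem.mp h0
      obtain ⟨t, htu, ht⟩ := aux_hensel_sq h2 (α i₀) hunit c hmem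
      set a'' : Fin r → A := Function.update a i₀ t with ha''
      have hsum2 : ∑ i, (α i : A) * a'' i ^ 2 = 0 := by
        rw [← Finset.add_sum_erase _ (fun i => (α i : A) * a'' i ^ 2) (Finset.mem_univ i₀)]
        have h1 : a'' i₀ = t := Function.update_self i₀ t a
        have h2' : ∑ i ∈ Finset.univ.erase i₀, (α i : A) * a'' i ^ 2 = c := by
          refine Finset.sum_congr rfl fun i hi => ?_
          rw [ha'', Function.update_of_ne (Finset.ne_of_mem_erase hi)]
        rw [h1, h2', ht]
      have := H (fun i => algebraMap A K (a'' i)) 0 ?_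
      · have h0 := congrFun this.1 i₀
        simp only [Pi.zero_apply] at h0
        have : a'' i₀ = 0 := hinj (by rw [h0, map_zero])
        rw [ha'', Function.update_self] at this
        exact htu.ne_zero this
      · have : ∑ i, algebraMap A K (α i) * algebraMap A K (a'' i) ^ 2
            = algebraMap A K (∑ i, (α i : A) * a'' i ^ 2) := by
          simp [map_sum, map_mul, map_pow]
        simp [this, hsum2]
    · -- β residue form anisotropic
      intro yb hyb
      by_contra hne
      obtain ⟨j₀, hj₀⟩ : ∃ j₀, yb j₀ ≠ 0 := by
        by_contra hc
        push_neg at hc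
        exact hne (funext hc)
      choose b hb using fun j => Ideal.Quotient.mk_surjective (I := maximalIdeal A) (yb j)
      have hunit : IsUnit (b j₀) := by
        by_contra hu
        exact hj₀ (by rw [← hb j₀]; exact Ideal.Quotient.eq_zero_iff_mem.mpr hu)
      set c : A := ∑ j ∈ Finset.univ.erase j₀, (β j : A) * b j ^ 2 with hc
      have hsum : ∑ j, (β j : A) * b j ^ 2 = (β j₀ : A) * b j₀ ^ 2 + c := by
        rw [hc, Finset.add_sum_erase _ (fun j => (β j : A) * b j ^ 2) (Finset.mem_univ j₀)]
      have hb' : ∀ j, residue A (b j) = yb j := hb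
      have hmem : (β j₀ : A) * b j₀ ^ 2 + c ∈ maximalIdeal A := by
        rw [← hsum]
        have h0 : residue A (∑ j, (β j : A) * b j ^ 2) = 0 := by
          rw [map_sum]
          simp only [map_mul, map_pow, hb']
          exact hyb
        exact Ideal.Quotient.eq_zero_iff_mem.mp h0
      obtain ⟨t, htu, ht⟩ := aux_hensel_sq h2 (β j₀) hunit c hmem
      set b'' : Fin s → A := Function.update b j₀ t with hb''
      have hsum2 : ∑ j, (β j : A) * b'' j ^ 2 = 0 := by
        rw [← Finset.add_sum_erase _ (fun j => (β j : A) * b'' j ^ 2) (Finset.mem_univ j₀)]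
        have h1 : b'' j₀ = t := Function.update_self j₀ t b
        have h2' : ∑ j ∈ Finset.univ.erase j₀, (β j : A) * b'' j ^ 2 = c := by
          refine Finset.sum_congr rfl fun j hj => ?_
          rw [hb'', Function.update_of_ne (Finset.ne_of_mem_erase hj)]
        rw [h1, h2', ht]
      have := H 0 (fun j => algebraMap A K (b'' j)) ?_
      · have h0 := congrFun this.2 j₀
        simp only [Pi.zero_apply] at h0
        have : b'' j₀ = 0 := hinj (by rw [h0, map_zero])
        rw [hb'', Function.update_self] at this
        exact htu.ne_zero this
      · have : ∑ j, algebraMap A K (β j) * algebraMap A K (b'' j) ^ 2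
            = algebraMap A K (∑ j, (β j : A) * b'' j ^ 2) := by
          simp [map_sum, map_mul, map_pow]
        simp [this, hsum2]
  · rintro ⟨hα, hβ⟩ x y heq
    obtain ⟨d, hd⟩ := IsLocalization.exist_integer_multiples (nonZeroDivisors A)
      Finset.univ (Sum.elim x y)
    choose f hf using fun i => hd i (Finset.mem_univ i)
    set D : K := algebraMap A K (d : A) with hD
    have hD0 : D ≠ 0 := by
      rw [hD]
      exact fun h => nonZeroDivisors.coe_ne_zero d (hinj (by rw [h, map_zero]))
    have hfx : ∀ i, algebraMap A K (f (Sum.inl i)) = D * x i := by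
      intro i
      rw [hf (Sum.inl i)]
      simp [Algebra.smul_def, hD]
    have hfy : ∀ j, algebraMap A K (f (Sum.inr j)) = D * y j := by
      intro j
      rw [hf (Sum.inr j)]
      simp [Algebra.smul_def, hD]
    have hK : (∑ i, algebraMap A K (α i) * (D * x i) ^ 2)
        + algebraMap A K π * ∑ j, algebraMap A K (β j) * (D * y j) ^ 2 = 0 := by
      have e1 : ∑ i, algebraMap A K (α i) * (D * x i) ^ 2
          = D ^ 2 * ∑ i, algebraMap A K (α i) * x i ^ 2 := by
        rw [Finset.mul_sum]; exact Finset.sum_congr rfl fun i _ => by ring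
      have e2 : ∑ j, algebraMap A K (β j) * (D * y j) ^ 2
          = D ^ 2 * ∑ j, algebraMap A K (β j) * y j ^ 2 := by
        rw [Finset.mul_sum]; exact Finset.sum_congr rfl fun j _ => by ring
      rw [e1, e2]
      linear_combination D ^ 2 * heq
    have hAeq : (∑ i, (α i : A) * f (Sum.inl i) ^ 2)
        + π * ∑ j, (β j : A) * f (Sum.inr j) ^ 2 = 0 := by
      apply hinj
      rw [map_zero]
      rw [map_add, map_mul, map_sum, map_sum]
      simp only [map_mul, map_pow, hfx, hfy]
      exact hK
    have hzero : ∀ i, f (Sum.inl i) = 0 := by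
      intro i
      refine aux_pow_dvd_zero hπ fun n => ?_
      exact ((aux_int hπ α β hα hβ n _ _ hAeq).1 i)
    have hzero' : ∀ j, f (Sum.inr j) = 0 := by
      intro j
      refine aux_pow_dvd_zero hπ fun n => ?_
      exact ((aux_int hπ α β hα hβ n _ _ hAeq).2 j)
    constructor
    · funext i
      have := hfx i
      rw [hzero i, map_zero] at this
      exact ((mul_eq_zero.mp this.symm).resolve_left hD0).symm ▸ rfl
    · funext j
      have := hfy j
      rw [hzero' j, map_zero] at this
      exact ((mul_eq_zero.mp this.symm).resolve_left hD0).symm ▸ rfl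
end

section
/- Let L be a field of characteristic ≠ 2, let d ∈ L× be a non-square, and set L' = L(√d). Let q be a rank 4 nondegenerate quadratic form over L with determinant class d modulo squares. If q becomes isotropic over L', then q is isotropic over L. -/
private lemma exists_orth4 {L : Type} [Field L] (r1 r2 r3 : Fin 4 → L) :
    ∃ w : Fin 4 → L, w ≠ 0 ∧ (∑ i, r1 i * w i = 0) ∧ (∑ i, r2 i * w i = 0) ∧
      (∑ i, r3 i * w i = 0) := by
  set M : Matrix (Fin 4) (Fin 4) L := Matrix.of ![r1, r2, r3, 0] with hM
  have hdet : M.det = 0 := Matrix.det_eq_zero_of_row_eq_zero 3 (by intro j; simp [hM])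
  obtain ⟨w, hw0, hw⟩ := Matrix.exists_mulVec_eq_zero_iff.mpr hdet
  have h0 := congrFun hw 0
  have h1 := congrFun hw 1
  have h2 := congrFun hw 2
  exact ⟨w, hw0, by simpa [hM, Matrix.mulVec, dotProduct] using h0,
    by simpa [hM, Matrix.mulVec, dotProduct] using h1,
    by simpa [hM, Matrix.mulVec, dotProduct] using h2⟩


/-- Let `L` be a field of characteristic `≠ 2`, `d ∈ L×` a non-square and `L' = L(√d)` (a
quadratic extension generated by a square root `s` of `d`). Let `q` be a rank 4
nondegenerate quadratic form over `L` with determinant class `d` modulo squares. If `q`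
becomes isotropic over `L'`, then `q` is isotropic over `L`. -/
theorem rank_four_descent
    (L : Type) [Field L] (h2 : (2 : L) ≠ 0)
    (d : L) (hd0 : d ≠ 0) (hd : ¬∃ c : L, c ^ 2 = d)
    (L' : Type) [Field L'] [Algebra L L']
    (hdim : Module.finrank L L' = 2)
    (s : L') (hs : s ^ 2 = algebraMap L L' d)
    (a : Fin 4 → L) (ha : ∀ i, a i ≠ 0)
    (hdet : ∃ c : L, c ≠ 0 ∧ a 0 * a 1 * a 2 * a 3 = d * c ^ 2)
    (hiso : ∃ x : Fin 4 → L', x ≠ 0 ∧ ∑ i, algebraMap L L' (a i) * x i ^ 2 = 0) :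
    ∃ x : Fin 4 → L, x ≠ 0 ∧ ∑ i, a i * x i ^ 2 = 0 := by
  set φ := algebraMap L L' with hφ
  have hinj : Function.Injective φ := (algebraMap L L').injective
  -- `1, s` linear algebra over L
  have hzero : ∀ p q : L, φ p + φ q * s = 0 → p = 0 ∧ q = 0 := by
    intro p q h
    by_cases hq : q = 0
    · subst hq
      simp at h
      exact ⟨hinj (by simpa using h), rfl⟩
    · exfalso
      have hsval : s = φ (-(p/q)) := by
        have hq' : φ q ≠ 0 := fun h' => hq (hinj (by simpa using h'))
        have hsq' : s * φ q = -φ p := by linear_combination h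
        rw [map_neg, map_div₀, ← neg_div, ← hsq', mul_div_cancel_right₀ _ hq']
      exact hd ⟨-(p/q), hinj (by rw [map_pow, ← hsval, hs])⟩
  have hdecomp : ∀ y : L', ∃ u v : L, y = φ u + φ v * s := by
    have hs0 : s ≠ 0 := by
      intro h
      rw [h] at hs
      exact hd0 (hinj (by simpa using hs.symm))
    have hli : LinearIndependent L ![(1 : L'), s] := by
      rw [LinearIndependent.pair_iff]
      intro p q hpq
      exact hzero p q (by rw [Algebra.smul_def, Algebra.smul_def] at hpq; linear_combination hpq)
    have hcard : Fintype.card (Fin 2) = Module.finrank L L' := by simp [hdim]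
    let B := basisOfLinearIndependentOfCardEqFinrank hli hcard
    intro y
    have hy := B.sum_repr y
    refine ⟨B.repr y 0, B.repr y 1, ?_⟩
    conv_lhs => rw [← hy]
    rw [Fin.sum_univ_two]
    have hB0 : B 0 = 1 := by simp [B, coe_basisOfLinearIndependentOfCardEqFinrank]
    have hB1 : B 1 = s := by simp [B, coe_basisOfLinearIndependentOfCardEqFinrank]
    rw [hB0, hB1, Algebra.smul_def, Algebra.smul_def]
    ring
  obtain ⟨x, hx0, hxsum⟩ := hiso
  choose u v hx using fun i => hdecomp (x i)
  -- extract the two equations over L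
  have hAB : φ (∑ i, (a i * u i ^ 2 + d * (a i * v i ^ 2))) +
      φ (∑ i, 2 * (a i * (u i * v i))) * s = 0 := by
    rw [← hxsum]
    simp only [Fin.sum_univ_four, hx, map_add, map_mul, map_pow, map_ofNat]
    linear_combination (-(φ (a 0) * φ (v 0) ^ 2 + φ (a 1) * φ (v 1) ^ 2 +
      φ (a 2) * φ (v 2) ^ 2 + φ (a 3) * φ (v 3) ^ 2)) * hs
  obtain ⟨hA, hB⟩ := hzero _ _ hAB
  have hE1 : (∑ i, a i * u i ^ 2) + d * (∑ i, a i * v i ^ 2) = 0 := by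
    simp only [Fin.sum_univ_four] at hA ⊢
    linear_combination hA
  have hE2 : (∑ i, a i * u i * v i) = 0 := by
    simp only [Fin.sum_univ_four] at hB ⊢
    apply mul_left_cancel₀ h2
    linear_combination hB
  by_cases hα : (∑ i, a i * u i ^ 2) = 0
  · by_cases hu : u = 0
    · -- then v works
      have hv : v ≠ 0 := by
        intro hv
        apply hx0
        funext i
        rw [hx i, hu, hv]
        simp
      refine ⟨v, hv, ?_⟩
      have hδ : d * (∑ i, a i * v i ^ 2) = 0 := by linear_combination hE1 - hα
      exact (mul_eq_zero.mp hδ).resolve_left hd0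
    · exact ⟨u, hu, hα⟩
  -- main case: (q(u) =: α) ≠ 0
  obtain ⟨w1, hw10, huw1, hvw1, -⟩ :=
    exists_orth4 (fun i => a i * u i) (fun i => a i * v i) 0
  by_cases hβ : (∑ i, a i * w1 i ^ 2) = 0
  · exact ⟨w1, hw10, hβ⟩
  obtain ⟨w2, hw20, huw2, hvw2, hw12⟩ :=
    exists_orth4 (fun i => a i * u i) (fun i => a i * v i) (fun i => a i * w1 i)
  by_cases hγ : (∑ i, a i * w2 i ^ 2) = 0
  · exact ⟨w2, hw20, hγ⟩
  -- the Gram determinant identity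
  set W : Fin 4 → Fin 4 → L := ![u, v, w1, w2] with hW
  set M : Matrix (Fin 4) (Fin 4) L := Matrix.of fun i j => W j i with hM
  have hgram : M.transpose * (Matrix.diagonal a * M) =
      Matrix.diagonal ![∑ i, a i * u i ^ 2, ∑ i, a i * v i ^ 2,
        ∑ i, a i * w1 i ^ 2, ∑ i, a i * w2 i ^ 2] := by
    simp only [Fin.sum_univ_four] at huw1 hvw1 huw2 hvw2 hw12 hE2
    ext j k
    fin_cases j <;> fin_cases k
    all_goals simp [hM, hW, Matrix.mul_apply, Matrix.diagonal, Fin.sum_univ_four]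
    all_goals (try ring)
    · linear_combination hE2
    · linear_combination huw1
    · linear_combination huw2
    · linear_combination hE2
    · linear_combination hvw1
    · linear_combination hvw2
    · linear_combination huw1
    · linear_combination hvw1
    · linear_combination hw12
    · linear_combination huw2
    · linear_combination hvw2
    · linear_combination hw12
  obtain ⟨c, hc0, hc⟩ := hdet
  have hkey : (∑ i, a i * u i ^ 2) * (∑ i, a i * v i ^ 2) *
      (∑ i, a i * w1 i ^ 2) * (∑ i, a i * w2 i ^ 2) =
      M.det ^ 2 * (a 0 * a 1 * a 2 * a 3) := by
    have h1 := congrArg Matrix.det hgram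
    rw [Matrix.det_mul, Matrix.det_mul, Matrix.det_transpose, Matrix.det_diagonal,
      Matrix.det_diagonal, Fin.prod_univ_four, Fin.prod_univ_four] at h1
    simp only [Matrix.cons_val_zero, Matrix.cons_val_one, Matrix.head_cons,
      Matrix.cons_val_two, Matrix.tail_cons, Matrix.cons_val_three,
      Matrix.diagonal_apply_eq] at h1
    linear_combination -h1
  have hsq : -((∑ i, a i * u i ^ 2) ^ 2 * (∑ i, a i * w1 i ^ 2) * (∑ i, a i * w2 i ^ 2))
      = (d * c * M.det) ^ 2 := by
    linear_combination (-((∑ i, a i * u i ^ 2) * (∑ i, a i * w1 i ^ 2) *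
      (∑ i, a i * w2 i ^ 2))) * hE1 + d * hkey + d * M.det ^ 2 * hc
  set t := d * c * M.det / ((∑ i, a i * u i ^ 2) * (∑ i, a i * w2 i ^ 2)) with ht
  have ht2 : t ^ 2 * (∑ i, a i * w2 i ^ 2) + (∑ i, a i * w1 i ^ 2) = 0 := by
    rw [ht]
    field_simp
    linear_combination -hsq
  refine ⟨fun i => w1 i + t * w2 i, ?_, ?_⟩
  · intro hz
    have hcon : ∀ i, w1 i + t * w2 i = 0 := fun i => congrFun hz i
    have hβt : (∑ i, a i * w1 i ^ 2) = t ^ 2 * (∑ i, a i * w2 i ^ 2) := by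
      simp only [Fin.sum_univ_four]
      linear_combination (a 0 * (w1 0 - t * w2 0)) * hcon 0 +
        (a 1 * (w1 1 - t * w2 1)) * hcon 1 + (a 2 * (w1 2 - t * w2 2)) * hcon 2 +
        (a 3 * (w1 3 - t * w2 3)) * hcon 3
    have h2β : (2 : L) * (∑ i, a i * w1 i ^ 2) = 0 := by linear_combination hβt + ht2
    exact hβ ((mul_eq_zero.mp h2β).resolve_left h2)
  · have ht2' := ht2
    simp only [Fin.sum_univ_four] at hw12 ht2' ⊢
    linear_combination ht2' + 2 * t * hw12
end

section
/- Let O be a 1-dimensional Noetherian local domain with fraction field F, whose normalization O' in F is a finitely generated O-module. Let O_v ⊆ F be a discrete valuation ring with fraction field F containing O such that the maximal ideal of O_v contracts to the maximal ideal of O. Then O_v equals the localization of O' at the prime O' ∩ m_v; in particular O' ⊆ O_v. -/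
def mvSet {F : Type} [Field F] (Ov : Subring F) : Set F :=
  {x : F | x ∈ Ov ∧ (x = 0 ∨ x⁻¹ ∉ Ov)}

theorem aux_isFractionRing {F : Type} [Field F] (R : Type*) [CommRing R] [IsDomain R]
    [Algebra R F] (hinj : Function.Injective (algebraMap R F))
    (h : ∀ x : F, ∃ p q : R, q ≠ 0 ∧ x = algebraMap R F p / algebraMap R F q) :
    IsFractionRing R F := by
  constructor
  constructor
  · rintro ⟨s, hs⟩
    have hs0 : s ≠ 0 := nonZeroDivisors.ne_zero hs
    refine isUnit_iff_ne_zero.mpr fun hc => hs0 (hinj ?_)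
    simpa using hc
  · intro z
    obtain ⟨p, q, hq, rfl⟩ := h z
    have hq' : algebraMap R F q ≠ 0 := fun hc => hq (hinj (by simpa using hc))
    exact ⟨⟨p, ⟨q, mem_nonZeroDivisors_of_ne_zero hq⟩⟩, by field_simp⟩
  · intro a b hab
    exact ⟨1, by simpa using hinj hab⟩

theorem aux_isUnit_subring_iff {F : Type} [Field F] {S : Subring F} (z : ↥S) :
    IsUnit z ↔ ∃ y ∈ S, (z : F) * y = 1 := by
  constructor
  · intro hz
    obtain ⟨w, hw⟩ := isUnit_iff_exists_inv.mp hz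
    exact ⟨w, w.2, by exact_mod_cast congrArg Subtype.val hw⟩
  · rintro ⟨y, hy, hzy⟩
    exact isUnit_iff_exists_inv.mpr ⟨⟨y, hy⟩, Subtype.ext hzy⟩

theorem aux_mem_mvSet_iff {F : Type} [Field F] {Ov : Subring F} {x : F} (hx : x ∈ Ov) :
    x ∈ mvSet Ov ↔ ¬∃ y ∈ Ov, x * y = 1 := by
  constructor
  · rintro ⟨-, h0 | hinv⟩ ⟨y, hy, hxy⟩
    · simp [h0] at hxy
    · refine hinv ?_
      have hx0 : x ≠ 0 := fun h => by simp [h] at hxy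
      have : y = x⁻¹ := by field_simp at hxy ⊢; linear_combination hxy
      exact this ▸ hy
  · intro h
    refine ⟨hx, or_iff_not_imp_left.mpr fun h0 hinv => h ⟨x⁻¹, hinv, mul_inv_cancel₀ h0⟩⟩

theorem aux_not_mem_mvSet {F : Type} [Field F] {Ov : Subring F} {x : F} (hx : x ∈ Ov)
    (h : x ∉ mvSet Ov) : x ≠ 0 ∧ x⁻¹ ∈ Ov := by
  by_contra hc
  rw [not_and_or, not_ne_iff] at hc
  exact h ⟨hx, hc⟩

theorem aux_mem_mvSet_iff_nonunit {F : Type} [Field F] {Ov : Subring F} (z : ↥Ov) :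
    (z : F) ∈ mvSet Ov ↔ ¬IsUnit z := by
  rw [aux_mem_mvSet_iff z.2, aux_isUnit_subring_iff]

theorem aux_noeth (R S : Type*) [CommRing R] [CommRing S] [Algebra R S]
    [IsNoetherianRing R] [Module.Finite R S] : IsNoetherianRing S :=
  isNoetherianRing_iff.mpr (isNoetherian_of_tower R (inferInstance : IsNoetherian R S))

theorem aux_dimensionLEOne {R : Type*} [CommRing R] [IsDomain R]
    (hdim : ringKrullDim R = 1) : Ring.DimensionLEOne R := by
  constructor
  intro p hp hpp
  obtain ⟨q, hq, hpq⟩ := p.exists_le_maximal hpp.ne_top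
  by_cases hpq' : p = q
  · exact hpq' ▸ hq
  · exfalso
    have h1 : (⟨⊥, Ideal.bot_prime⟩ : PrimeSpectrum R) < ⟨p, hpp⟩ := by
      change (⊥ : Ideal R) < p
      exact bot_lt_iff_ne_bot.mpr hp
    have h2 : (⟨p, hpp⟩ : PrimeSpectrum R) < ⟨q, hq.isPrime⟩ := by
      change p < q
      exact lt_of_le_of_ne hpq hpq'
    let c : LTSeries (PrimeSpectrum R) :=
      ((RelSeries.singleton _ ⟨⊥, Ideal.bot_prime⟩).snoc ⟨p, hpp⟩ h1).snoc ⟨q, hq.isPrime⟩ (by exact h2)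
    have hlen := Order.LTSeries.length_le_krullDim c
    have hc : c.length = 2 := rfl
    rw [hc] at hlen
    rw [show Order.krullDim (PrimeSpectrum R) = ringKrullDim R from rfl, hdim] at hlen
    norm_num at hlen

set_option maxHeartbeats 1600000 in
set_option synthInstance.maxHeartbeats 1000000 in
/-- Let `O` be a 1-dimensional Noetherian local domain with fraction field `F` whose
normalization `O'` in `F` is a finitely generated `O`-module. Let `Ov ⊆ F` be a discrete
valuation ring with fraction field `F` containing `O`, whose maximal ideal contracts to the
maximal ideal of `O`. Then `O' ⊆ Ov` and `Ov` equals the localization of `O'` at the prime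
`O' ∩ m_v`. -/
theorem dvr_eq_localization_of_normalization
    (F : Type) [Field F]
    (O : Subring F) [IsNoetherianRing ↥O] [IsLocalRing ↥O]
    (hdim : ringKrullDim ↥O = 1)
    (hfracO : ∀ x : F, ∃ p q : F, p ∈ O ∧ q ∈ O ∧ q ≠ 0 ∧ x = p / q)
    (hfin : (integralClosure (↥O) F).FG)
    (Ov : Subring F) [IsDiscreteValuationRing ↥Ov]
    (hval : ∀ x : F, x ≠ 0 → x ∈ Ov ∨ x⁻¹ ∈ Ov)
    (hOle : O ≤ Ov)
    -- the maximal ideal of `Ov` contracts to the maximal ideal of `O`: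
    (hcontr : ∀ x : F, x ∈ O → (x ∈ mvSet Ov ↔ ¬∃ y ∈ O, x * y = 1)) :
    (↑(Subalgebra.toSubring (integralClosure (↥O) F)) : Set F) ⊆ (Ov : Set F) ∧
      (Ov : Set F) =
        {x : F | ∃ p q : F, p ∈ Subalgebra.toSubring (integralClosure (↥O) F) ∧
          q ∈ Subalgebra.toSubring (integralClosure (↥O) F) ∧
          q ∉ mvSet Ov ∧ x = p / q} := by
  classical
  -- fraction ring instances
  haveI hFracOv : IsFractionRing ↥Ov F := by
    refine aux_isFractionRing ↥Ov Subtype.val_injective fun x => ?_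
    by_cases hx0 : x = 0
    · exact ⟨0, 1, one_ne_zero, by simp [hx0]⟩
    · rcases hval x hx0 with h | h
      · exact ⟨⟨x, h⟩, 1, one_ne_zero, by rw [map_one, div_one]; rfl⟩
      · refine ⟨1, ⟨x⁻¹, h⟩, ?_, ?_⟩
        · exact fun hc => hx0 (by simpa using congrArg Subtype.val hc)
        · rw [map_one]
          show x = 1 / x⁻¹
          rw [one_div, inv_inv]
  -- part 1 : integral closure is contained in Ov
  have hsub : ∀ x : F, x ∈ integralClosure ↥O F → x ∈ Ov := by
    intro x hx
    letI : Algebra ↥O ↥Ov := (Subring.inclusion hOle).toAlgebra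
    haveI : IsScalarTower ↥O ↥Ov F := IsScalarTower.of_algebraMap_eq fun a => rfl
    have hint : IsIntegral ↥Ov x := IsIntegral.tower_top ((mem_integralClosure_iff ↥O F).mp hx)
    obtain ⟨y, hy⟩ := IsIntegrallyClosed.isIntegral_iff.mp hint
    exact hy ▸ y.2
  -- the inclusion of the integral closure into Ov
  let f : ↥(integralClosure ↥O F) →+* ↥Ov :=
    { toFun := fun x => ⟨x.1, hsub x.1 x.2⟩
      map_one' := rfl
      map_mul' := fun _ _ => rfl
      map_zero' := rfl
      map_add' := fun _ _ => rfl }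
  let P : Ideal ↥(integralClosure ↥O F) := Ideal.comap f (IsLocalRing.maximalIdeal ↥Ov)
  haveI hPprime : P.IsPrime := Ideal.IsPrime.comap f
  have hmemP : ∀ z : ↥(integralClosure ↥O F), z ∈ P ↔ (z : F) ∈ mvSet Ov := by
    intro z
    show f z ∈ IsLocalRing.maximalIdeal ↥Ov ↔ _
    rw [IsLocalRing.mem_maximalIdeal, mem_nonunits_iff, ← aux_mem_mvSet_iff_nonunit]
    exact Iff.rfl
  have hmemO : ∀ a : ↥O, a ∈ IsLocalRing.maximalIdeal ↥O ↔ (a : F) ∈ mvSet Ov := by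
    intro a
    rw [IsLocalRing.mem_maximalIdeal, mem_nonunits_iff, aux_isUnit_subring_iff]
    exact (hcontr a a.2).symm
  haveI : Algebra.IsIntegral ↥O ↥(integralClosure ↥O F) := integralClosure.AlgebraIsIntegral
  have hcomap : P.comap (algebraMap ↥O ↥(integralClosure ↥O F)) = IsLocalRing.maximalIdeal ↥O := by
    ext a
    rw [Ideal.mem_comap, hmemP, hmemO]
    exact Iff.rfl
  haveI hPmax : P.IsMaximal := by
    refine Ideal.isMaximal_of_isIntegral_of_isMaximal_comap (R := ↥O) P ?_
    rw [hcomap]; exact IsLocalRing.maximalIdeal.isMaximal ↥O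
  have hObot : IsLocalRing.maximalIdeal ↥O ≠ ⊥ := by
    intro h
    have hfield : IsField ↥O := IsLocalRing.isField_iff_maximalIdeal_eq.mpr h
    rw [ringKrullDim_eq_zero_of_isField hfield] at hdim
    norm_num at hdim
  have hPbot : P ≠ ⊥ := by
    intro h
    obtain ⟨a, ham, ha0⟩ := Submodule.exists_mem_ne_zero_of_ne_bot hObot
    have haP : algebraMap ↥O ↥(integralClosure ↥O F) a ∈ P := by
      rw [hmemP]; exact (hmemO a).mp ham
    rw [h, Ideal.mem_bot] at haP
    have hv : (a : F) = 0 := congrArg Subtype.val haP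
    exact ha0 (Subtype.ext hv)
  -- Dedekind domain instances for the integral closure
  haveI : Algebra.FiniteType ↥O ↥(integralClosure ↥O F) :=
    (Subalgebra.fg_iff_finiteType _).mp hfin
  haveI : Module.Finite ↥O ↥(integralClosure ↥O F) := Algebra.IsIntegral.finite
  haveI : IsNoetherianRing ↥(integralClosure ↥O F) := aux_noeth ↥O ↥(integralClosure ↥O F)
  haveI : Ring.DimensionLEOne ↥O := aux_dimensionLEOne hdim
  haveI : Ring.DimensionLEOne ↥(integralClosure ↥O F) := inferInstance
  have hmemC : ∀ x : F, x ∈ O → x ∈ integralClosure ↥O F := by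
    intro x hx
    exact (isIntegral_algebraMap : IsIntegral ↥O (algebraMap ↥O F ⟨x, hx⟩))
  haveI : IsFractionRing ↥(integralClosure ↥O F) F := by
    refine aux_isFractionRing _ Subtype.val_injective fun x => ?_
    obtain ⟨p, q, hp, hq, hq0, hx⟩ := hfracO x
    refine ⟨⟨p, hmemC p hp⟩, ⟨q, hmemC q hq⟩, fun hc => hq0 (congrArg Subtype.val hc), hx⟩
  haveI : IsIntegrallyClosed ↥(integralClosure ↥O F) := by
    refine (isIntegrallyClosed_iff F).mpr fun {x} hx => ⟨⟨x, isIntegral_trans x hx⟩, rfl⟩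
  haveI : IsDedekindRing ↥(integralClosure ↥O F) :=
    (isDedekindRing_iff (A := ↥(integralClosure ↥O F)) F).mpr ⟨inferInstance, inferInstance,
      fun {x} hx => ((isIntegrallyClosed_iff (R := ↥(integralClosure ↥O F)) F).mp inferInstance) hx⟩
  haveI : IsDedekindDomain ↥(integralClosure ↥O F) := ⟨⟩
  -- localization at P
  haveI hdvr : IsDiscreteValuationRing (Localization.AtPrime P) :=
    IsLocalization.AtPrime.isDiscreteValuationRing_of_dedekind_domain
      ↥(integralClosure ↥O F) hPbot _
  letI : Algebra (Localization.AtPrime P) F :=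
    IsLocalization.localizationAlgebraOfSubmonoidLe _ _ P.primeCompl
      (nonZeroDivisors ↥(integralClosure ↥O F)) P.primeCompl_le_nonZeroDivisors
  haveI : IsScalarTower ↥(integralClosure ↥O F) (Localization.AtPrime P) F :=
    IsLocalization.localization_isScalarTower_of_submonoid_le _ _ _ _
      P.primeCompl_le_nonZeroDivisors
  haveI : IsFractionRing (Localization.AtPrime P) F :=
    IsFractionRing.isFractionRing_of_isDomain_of_isLocalization P.primeCompl (Localization.AtPrime P) F
  haveI : ValuationRing (Localization.AtPrime P) := inferInstance
  have hkey : ∀ x : F, IsLocalization.IsInteger (Localization.AtPrime P) x →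
      ∃ p q : F, p ∈ integralClosure ↥O F ∧ q ∈ integralClosure ↥O F ∧
        q ∉ mvSet Ov ∧ x = p / q := by
    rintro x ⟨r, rfl⟩
    obtain ⟨⟨a, s⟩, rfl⟩ := IsLocalization.mk'_surjective P.primeCompl r
    have hs0 : ((s : ↥(integralClosure ↥O F)) : F) ≠ 0 := by
      intro hc
      exact s.2 (show (s : ↥(integralClosure ↥O F)) ∈ P from
        (Subtype.ext hc : (s : ↥(integralClosure ↥O F)) = 0) ▸ P.zero_mem)
    have h2 := congrArg (algebraMap (Localization.AtPrime P) F)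
      (IsLocalization.mk'_spec (Localization.AtPrime P) a s)
    rw [map_mul, ← IsScalarTower.algebraMap_apply, ← IsScalarTower.algebraMap_apply] at h2
    refine ⟨a, s, a.2, (s : ↥(integralClosure ↥O F)).2,
      fun hm => s.2 ((hmemP _).mpr hm), ?_⟩
    rw [eq_div_iff hs0]
    exact h2
  have hkey' : ∀ x : F, ∀ p q : F, p ∈ integralClosure ↥O F → q ∈ integralClosure ↥O F →
      q ∉ mvSet Ov → x = p / q → IsLocalization.IsInteger (Localization.AtPrime P) x := by
    rintro x p q hp hq hqm rfl
    have hqP : (⟨q, hq⟩ : ↥(integralClosure ↥O F)) ∈ P.primeCompl :=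
      fun h => hqm ((hmemP _).mp h)
    have hq0 : q ≠ 0 := (aux_not_mem_mvSet (hsub q hq) hqm).1
    refine ⟨IsLocalization.mk' _ (⟨p, hp⟩ : ↥(integralClosure ↥O F))
      (⟨⟨q, hq⟩, hqP⟩ : P.primeCompl), ?_⟩
    have h2 := congrArg (algebraMap (Localization.AtPrime P) F)
      (IsLocalization.mk'_spec (Localization.AtPrime P) (⟨p, hp⟩ : ↥(integralClosure ↥O F))
        (⟨⟨q, hq⟩, hqP⟩ : P.primeCompl))
    rw [map_mul, ← IsScalarTower.algebraMap_apply, ← IsScalarTower.algebraMap_apply] at h2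
    rw [eq_div_iff hq0]
    exact h2
  -- conclusion
  refine ⟨fun x hx => hsub x (by simpa using hx), ?_⟩
  ext x
  simp only [SetLike.mem_coe, Set.mem_setOf_eq, Subalgebra.mem_toSubring]
  constructor
  · intro hxOv
    by_cases hx0 : x = 0
    · refine ⟨0, 1, zero_mem _, one_mem _, ?_, by simp [hx0]⟩
      rintro ⟨-, h | h⟩
      · exact one_ne_zero h
      · exact h (by simpa using Ov.one_mem)
    · rcases ValuationRing.isInteger_or_isInteger (Localization.AtPrime P) x with h | h
      · exact hkey x h
      · obtain ⟨p, q, hp, hq, hqm, hxe⟩ := hkey x⁻¹ h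
        obtain ⟨hq0, hqinv⟩ := aux_not_mem_mvSet (hsub q hq) hqm
        have hp0 : p ≠ 0 := by
          intro h0
          rw [h0, zero_div] at hxe
          exact hx0 (inv_eq_zero.mp hxe)
        have hpval : p = x⁻¹ * q := by rw [hxe]; field_simp
        have hpinv : p⁻¹ = x * q⁻¹ := by rw [hpval, mul_inv, inv_inv]
        have hpm : p ∉ mvSet Ov := by
          rintro ⟨-, h' | h'⟩
          · exact hp0 h'
          · exact h' (by rw [hpinv]; exact Ov.mul_mem hxOv hqinv)
        refine ⟨q, p, hq, hp, hpm, ?_⟩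
        have hxq : x = (p / q)⁻¹ := by rw [← hxe, inv_inv]
        rw [hxq, inv_div]
  · rintro ⟨p, q, hp, hq, hqm, rfl⟩
    obtain ⟨hq0, hqinv⟩ := aux_not_mem_mvSet (hsub q hq) hqm
    rw [div_eq_mul_inv]
    exact Ov.mul_mem (hsub p hp) hqinv
end
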